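/- Let m ≥ 2 be an integer and define u : (0,∞) → ℝ by u(r) = (∫₀^r (sinh t)^(m-1) dt) / (sinh r)^(m-1). Then for every r > 0 one has 0 < u(r) < 1/(m−1). -/

import Mathlib

/-- For an integer `m ≥ 2` and
`u r = (∫₀^r (sinh t)^(m-1) dt) / (sinh r)^(m-1)`, one has `0 < u r < 1/(m-1)`
for every `r > 0`. -/
theorem stmt_2 (m : ℕ) (hm : 2 ≤ m) (u : ℝ → ℝ)
    (hu : ∀ r : ℝ, u r =
      (∫ t in (0:ℝ)..r, Real.sinh t ^ (m - 1)) / Real.sinh r ^ (m - 1)) :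
    ∀ r : ℝ, 0 < r → 0 < u r ∧ u r < 1 / ((m : ℝ) - 1) := by
  obtain ⟨j, rfl⟩ : ∃ j, m = j + 2 := ⟨m - 2, by omega⟩
  intro r hr
  have hsr : 0 < Real.sinh r := Real.sinh_pos_iff.mpr hr
  have hpow : 0 < Real.sinh r ^ (j + 1) := pow_pos hsr _
  have hcontj : Continuous fun t : ℝ => Real.sinh t ^ j := Real.continuous_sinh.pow _
  have hcont : Continuous fun t : ℝ => Real.sinh t ^ (j + 1) :=
    Real.continuous_sinh.pow _
  have hint_pos : 0 < ∫ t in (0:ℝ)..r, Real.sinh t ^ (j + 1) := by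
    apply intervalIntegral.intervalIntegral_pos_of_pos_on
      (hcont.intervalIntegrable 0 r)
    · intro x hx
      exact pow_pos (Real.sinh_pos_iff.mpr hx.1) _
    · exact hr
  have hderiv : ∀ t ∈ Set.uIcc (0:ℝ) r,
      HasDerivAt (fun s : ℝ => Real.sinh s ^ (j + 1) / (j + 1))
        (Real.sinh t ^ j * Real.cosh t) t := by
    intro t _
    have h1 : HasDerivAt (fun s : ℝ => Real.sinh s ^ (j + 1))
        (((j:ℝ) + 1) * Real.sinh t ^ j * Real.cosh t) t := by
      have := (Real.hasDerivAt_sinh t).pow (j + 1)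
      refine this.congr_deriv ?_
      push_cast
      ring
    have h2 := h1.div_const ((j:ℝ) + 1)
    refine h2.congr_deriv ?_
    have hne : ((j:ℝ) + 1) ≠ 0 := by positivity
    field_simp
  have hanti : (∫ t in (0:ℝ)..r, Real.sinh t ^ j * Real.cosh t)
      = Real.sinh r ^ (j + 1) / (j + 1) := by
    rw [intervalIntegral.integral_eq_sub_of_hasDerivAt hderiv
      ((hcontj.mul Real.continuous_cosh).intervalIntegrable 0 r)]
    simp
  have hlt : (∫ t in (0:ℝ)..r, Real.sinh t ^ (j + 1))
      < ∫ t in (0:ℝ)..r, Real.sinh t ^ j * Real.cosh t := by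
    apply intervalIntegral.integral_lt_integral_of_continuousOn_of_le_of_exists_lt hr
      hcont.continuousOn (hcontj.mul Real.continuous_cosh).continuousOn
    · intro x hx
      have hs : 0 < Real.sinh x := Real.sinh_pos_iff.mpr hx.1
      have h := Real.sinh_lt_cosh x
      calc Real.sinh x ^ (j + 1) = Real.sinh x ^ j * Real.sinh x := by ring
        _ ≤ Real.sinh x ^ j * Real.cosh x :=
            mul_le_mul_of_nonneg_left h.le (by positivity)
    · refine ⟨r, Set.right_mem_Icc.mpr hr.le, ?_⟩
      have h := Real.sinh_lt_cosh r
      calc Real.sinh r ^ (j + 1) = Real.sinh r ^ j * Real.sinh r := by ring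
        _ < Real.sinh r ^ j * Real.cosh r :=
            mul_lt_mul_of_pos_left h (pow_pos hsr _)
  have key : (∫ t in (0:ℝ)..r, Real.sinh t ^ (j + 1))
      < Real.sinh r ^ (j + 1) / (j + 1) := hanti ▸ hlt
  rw [hu]
  constructor
  · positivity
  · have hcast : ((j + 2 : ℕ) : ℝ) - 1 = (j : ℝ) + 1 := by push_cast; ring
    rw [show j + 2 - 1 = j + 1 from rfl, hcast, div_lt_div_iff₀ hpow (by positivity)]
    have hj1 : (0:ℝ) < (j:ℝ) + 1 := by positivity
    calc (∫ t in (0:ℝ)..r, Real.sinh t ^ (j + 1)) * ((j:ℝ) + 1)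
        < Real.sinh r ^ (j + 1) / (j + 1) * ((j:ℝ) + 1) :=
          mul_lt_mul_of_pos_right key hj1
      _ = 1 * Real.sinh r ^ (j + 1) := by field_simp
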